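/- Level set identification under level-set invariance (equation (cor.5)): let u0 : Ω → ℝ be bounded measurable with no flat regions and let w : Ω → ℝ be bounded measurable with no flat regions, such that u0(x1) = u0(x2) implies w(x1) = w(x2) for all x1, x2 ∈ Ω and moreover x ↦ w(x) is a nondecreasing function of u0(x) (i.e. u0(x1) > u0(x2) implies w(x1) ≥ w(x2)). Then for every s ∈ (0,|Ω|), the sets {x ∈ Ω : w(x) > w_*(s)} and {x ∈ Ω : u0(x) > u_{0*}(s)} coincide up to a Lebesgue-null set, and consequently ∫_{{x : w(x) > w_*(s)}} u0(x) dx = ∫_0^s u_{0*}(σ) dσ. -/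

import Mathlib

open MeasureTheory Set

/-- The distribution function `m_w(q) = |{x ∈ Ω : w(x) > q}|`. -/
noncomputable def distFun {d : ℕ} (Ω : Set (Fin d → ℝ)) (w : (Fin d → ℝ) → ℝ)
    (q : ℝ) : ℝ :=
  (volume {x ∈ Ω | q < w x}).toReal

/-- The decreasing rearrangement `w_*(s) = inf{q ∈ ℝ : m_w(q) ≤ s}`. -/
noncomputable def decRearr {d : ℕ} (Ω : Set (Fin d → ℝ)) (w : (Fin d → ℝ) → ℝ)
    (s : ℝ) : ℝ :=
  sInf {q : ℝ | distFun Ω w q ≤ s}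

section helpers

variable {d : ℕ} {Ω : Set (Fin d → ℝ)} {f : (Fin d → ℝ) → ℝ}

lemma levelSet_meas (hΩ : MeasurableSet Ω) (hf : Measurable f) (q : ℝ) :
    MeasurableSet {x ∈ Ω | q < f x} :=
  hΩ.inter (hf measurableSet_Ioi)

lemma levelSet_ne_top (hΩT : volume Ω ≠ ⊤) (q : ℝ) :
    volume {x ∈ Ω | q < f x} ≠ ⊤ :=
  ne_top_of_le_ne_top hΩT (measure_mono (sep_subset _ _))

lemma distFun_anti (hΩT : volume Ω ≠ ⊤) : Antitone (distFun Ω f) := by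
  intro q1 q2 h
  exact ENNReal.toReal_mono (levelSet_ne_top hΩT q1)
    (measure_mono fun x hx => ⟨hx.1, lt_of_le_of_lt h hx.2⟩)

lemma distFun_eq_vol {Mf : ℝ} (hb : ∀ x ∈ Ω, |f x| ≤ Mf) {q : ℝ} (hq : q < -Mf) :
    distFun Ω f q = (volume Ω).toReal := by
  have hset : {x ∈ Ω | q < f x} = Ω := by
    ext x
    simp only [mem_sep_iff]
    exact ⟨fun h => h.1, fun hx => ⟨hx, lt_of_lt_of_le hq (neg_le_of_abs_le (hb x hx))⟩⟩
  rw [distFun, hset]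

lemma distFun_eq_zero {Mf : ℝ} (hb : ∀ x ∈ Ω, |f x| ≤ Mf) {q : ℝ} (hq : Mf ≤ q) :
    distFun Ω f q = 0 := by
  have hset : {x ∈ Ω | q < f x} = (∅ : Set (Fin d → ℝ)) := by
    ext x
    simp only [mem_sep_iff, mem_empty_iff_false, iff_false, not_and, not_lt]
    intro hx
    exact le_trans (le_trans (le_abs_self _) (hb x hx)) hq
  rw [distFun, hset]
  simp

lemma distFun_le_of_forall (hΩ : MeasurableSet Ω) (hf : Measurable f)
    (hΩT : volume Ω ≠ ⊤) {q σ : ℝ} (hσ : 0 ≤ σ)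
    (h : ∀ ε > 0, distFun Ω f (q + ε) ≤ σ) : distFun Ω f q ≤ σ := by
  have hU : {x ∈ Ω | q < f x} = ⋃ n : ℕ, {x ∈ Ω | q + 1/(n+1) < f x} := by
    ext x
    constructor
    · rintro ⟨hx, hq⟩
      obtain ⟨n, hn⟩ := exists_nat_one_div_lt (sub_pos.2 hq)
      exact mem_iUnion.2 ⟨n, hx, by linarith⟩
    · intro hx
      obtain ⟨n, hx1, hx2⟩ := mem_iUnion.1 hx
      refine ⟨hx1, lt_of_le_of_lt (le_add_of_nonneg_right (by positivity)) hx2⟩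
  have hmono : Monotone (fun n : ℕ => {x ∈ Ω | q + 1/((n:ℝ)+1) < f x}) := by
    intro n m hnm x hx
    refine ⟨hx.1, lt_of_le_of_lt ?_ hx.2⟩
    have h1 : (1:ℝ)/((m:ℝ)+1) ≤ 1/((n:ℝ)+1) := by
      apply one_div_le_one_div_of_le (by positivity)
      have := (Nat.cast_le (α := ℝ)).2 hnm; linarith
    linarith
  have hsup : volume {x ∈ Ω | q < f x} = ⨆ n : ℕ, volume {x ∈ Ω | q + 1/((n:ℝ)+1) < f x} := by
    rw [hU]
    exact hmono.directed_le.measure_iUnion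
  have hle : volume {x ∈ Ω | q < f x} ≤ ENNReal.ofReal σ := by
    rw [hsup]
    refine iSup_le fun n => ?_
    rw [ENNReal.le_ofReal_iff_toReal_le (levelSet_ne_top hΩT _) hσ]
    exact h _ (by positivity)
  calc distFun Ω f q ≤ (ENNReal.ofReal σ).toReal :=
        ENNReal.toReal_mono ENNReal.ofReal_ne_top hle
    _ = σ := ENNReal.toReal_ofReal hσ

lemma rearr_gt_iff (hΩ : MeasurableSet Ω) (hf : Measurable f) (hΩT : volume Ω ≠ ⊤)
    {Mf : ℝ} (hb : ∀ x ∈ Ω, |f x| ≤ Mf) {σ q : ℝ}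
    (hσ0 : 0 < σ) (hσL : σ < (volume Ω).toReal) :
    q < decRearr Ω f σ ↔ σ < distFun Ω f q := by
  set S := {p : ℝ | distFun Ω f p ≤ σ} with hS
  have hSne : S.Nonempty := ⟨Mf, by simp [hS, distFun_eq_zero hb le_rfl, hσ0.le]⟩
  have hbdd : BddBelow S := by
    refine ⟨-Mf, fun p hp => ?_⟩
    by_contra hc
    push_neg at hc
    rw [mem_setOf_eq, distFun_eq_vol hb hc] at hp
    exact absurd hp (not_le.2 hσL)
  constructor
  · intro h
    by_contra hc
    push_neg at hc
    exact absurd (csInf_le hbdd (by exact hc : q ∈ S)) (not_le.2 h)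
  · intro h
    by_contra hc
    push_neg at hc
    have : distFun Ω f q ≤ σ := by
      apply distFun_le_of_forall hΩ hf hΩT hσ0.le
      intro ε hε
      obtain ⟨p, hpS, hp⟩ := exists_lt_of_csInf_lt hSne
        (show sInf S < q + ε by unfold decRearr at hc; linarith)
      exact le_trans (distFun_anti hΩT hp.le) hpS
    linarith

lemma abs_rearr_le (hΩ : MeasurableSet Ω) (hf : Measurable f) (hΩT : volume Ω ≠ ⊤)
    {Mf : ℝ} (hb : ∀ x ∈ Ω, |f x| ≤ Mf) {σ : ℝ}
    (hσ0 : 0 < σ) (hσL : σ < (volume Ω).toReal) :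
    |decRearr Ω f σ| ≤ Mf := by
  rw [abs_le]
  constructor
  · refine le_of_forall_lt fun q hq => ?_
    rw [rearr_gt_iff hΩ hf hΩT hb hσ0 hσL, distFun_eq_vol hb (by linarith)]
    exact hσL
  · by_contra hc
    push_neg at hc
    have := (rearr_gt_iff hΩ hf hΩT hb hσ0 hσL).1 hc
    rw [distFun_eq_zero hb le_rfl] at this
    linarith

lemma distFun_decRearr (hΩ : MeasurableSet Ω) (hf : Measurable f) (hΩT : volume Ω ≠ ⊤)
    {Mf : ℝ} (hb : ∀ x ∈ Ω, |f x| ≤ Mf)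
    (hflat : ∀ q : ℝ, volume {x ∈ Ω | f x = q} = 0) {s : ℝ}
    (hs0 : 0 < s) (hsL : s < (volume Ω).toReal) :
    distFun Ω f (decRearr Ω f s) = s := by
  set t := decRearr Ω f s with ht
  refine le_antisymm ?_ ?_
  · by_contra hc
    push_neg at hc
    exact absurd ((rearr_gt_iff hΩ hf hΩT hb hs0 hsL).2 hc) (lt_irrefl t)
  · have hlow : ∀ n : ℕ, s < distFun Ω f (t - 1/((n:ℝ)+1)) := by
      intro n
      refine (rearr_gt_iff hΩ hf hΩT hb hs0 hsL).1 ?_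
      have : (0:ℝ) < 1/((n:ℝ)+1) := by positivity
      linarith
    have hanti : Antitone (fun n : ℕ => {x ∈ Ω | t - 1/((n:ℝ)+1) < f x}) := by
      intro n m hnm x hx
      refine ⟨hx.1, lt_of_le_of_lt ?_ hx.2⟩
      have h1 : (1:ℝ)/((m:ℝ)+1) ≤ 1/((n:ℝ)+1) := by
        apply one_div_le_one_div_of_le (by positivity)
        have := (Nat.cast_le (α := ℝ)).2 hnm; linarith
      linarith
    have hInt : {x ∈ Ω | t ≤ f x} = ⋂ n : ℕ, {x ∈ Ω | t - 1/((n:ℝ)+1) < f x} := by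
      ext x
      constructor
      · intro hx
        refine mem_iInter.2 fun n => ⟨hx.1, ?_⟩
        have : (0:ℝ) < 1/((n:ℝ)+1) := by positivity
        linarith [hx.2]
      · intro hx
        have hx0 := mem_iInter.1 hx 0
        refine ⟨hx0.1, ?_⟩
        by_contra hc
        push_neg at hc
        obtain ⟨n, hn⟩ := exists_nat_one_div_lt (sub_pos.2 hc)
        have := (mem_iInter.1 hx n).2
        linarith
    have hiInf : volume {x ∈ Ω | t ≤ f x}
        = ⨅ n : ℕ, volume {x ∈ Ω | t - 1/((n:ℝ)+1) < f x} := by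
      rw [hInt]
      exact hanti.measure_iInter (fun n => (levelSet_meas hΩ hf _).nullMeasurableSet)
        ⟨0, levelSet_ne_top hΩT _⟩
    have h1 : ENNReal.ofReal s ≤ volume {x ∈ Ω | t ≤ f x} := by
      rw [hiInf]
      refine le_iInf fun n => ?_
      exact ((ENNReal.ofReal_lt_iff_lt_toReal hs0.le (levelSet_ne_top hΩT _)).2 (hlow n)).le
    have h2 : volume {x ∈ Ω | t ≤ f x}
        ≤ volume {x ∈ Ω | t < f x} + volume {x ∈ Ω | f x = t} := by
      refine le_trans (measure_mono ?_) (measure_union_le _ _)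
      intro x hx
      rcases lt_or_eq_of_le hx.2 with h | h
      · exact Or.inl ⟨hx.1, h⟩
      · exact Or.inr ⟨hx.1, h.symm⟩
    rw [hflat t, add_zero] at h2
    have h3 := le_trans h1 h2
    calc s = (ENNReal.ofReal s).toReal := (ENNReal.toReal_ofReal hs0.le).symm
      _ ≤ distFun Ω f t := ENNReal.toReal_mono (levelSet_ne_top hΩT _) h3

lemma vol_levelSet_rearr (hΩ : MeasurableSet Ω) (hf : Measurable f) (hΩT : volume Ω ≠ ⊤)
    {Mf : ℝ} (hb : ∀ x ∈ Ω, |f x| ≤ Mf)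
    (hflat : ∀ q : ℝ, volume {x ∈ Ω | f x = q} = 0) {s : ℝ}
    (hs0 : 0 < s) (hsL : s < (volume Ω).toReal) :
    volume {x ∈ Ω | decRearr Ω f s < f x} = ENNReal.ofReal s := by
  have h := distFun_decRearr hΩ hf hΩT hb hflat hs0 hsL
  have h2 := (ENNReal.ofReal_toReal (levelSet_ne_top (f := f) hΩT (decRearr Ω f s))).symm
  rw [h2]
  rw [show (volume {x ∈ Ω | decRearr Ω f s < f x}).toReal = distFun Ω f (decRearr Ω f s) from rfl, h]

end helpers

/-- Level set identification under level-set invariance (equation (cor.5)): if `w` is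
a monotone nondecreasing function of `u0` (levelset-wise), both without flat regions,
then `{w > w_*(s)}` and `{u0 > u_{0*}(s)}` coincide up to a null set and
`∫_{{w > w_*(s)}} u0 = ∫_0^s u_{0*}(σ) dσ`. -/
theorem stmt_12
    (d : ℕ) (hd : 1 ≤ d)
    (Ω : Set (Fin d → ℝ)) (hΩopen : IsOpen Ω) (hΩbdd : Bornology.IsBounded Ω)
    (u0 : (Fin d → ℝ) → ℝ) (hu0m : Measurable u0) (M0 : ℝ) (hu0b : ∀ x ∈ Ω, |u0 x| ≤ M0)
    (hu0flat : ∀ q : ℝ, volume {x ∈ Ω | u0 x = q} = 0)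
    (w : (Fin d → ℝ) → ℝ) (hwm : Measurable w) (M : ℝ) (hwb : ∀ x ∈ Ω, |w x| ≤ M)
    (hwflat : ∀ q : ℝ, volume {x ∈ Ω | w x = q} = 0)
    (hlevel : ∀ x1 ∈ Ω, ∀ x2 ∈ Ω, u0 x1 = u0 x2 → w x1 = w x2)
    (hmono : ∀ x1 ∈ Ω, ∀ x2 ∈ Ω, u0 x2 < u0 x1 → w x2 ≤ w x1) :
    ∀ s ∈ Ioo (0:ℝ) (volume Ω).toReal,
      volume (symmDiff {x ∈ Ω | decRearr Ω w s < w x} {x ∈ Ω | decRearr Ω u0 s < u0 x}) = 0 ∧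
      (∫ x in {x ∈ Ω | decRearr Ω w s < w x}, u0 x)
        = ∫ σ in (0:ℝ)..s, decRearr Ω u0 σ := by
  intro s hs
  obtain ⟨hs0, hsL⟩ := hs
  have hΩ : MeasurableSet Ω := hΩopen.measurableSet
  have hΩT : volume Ω ≠ ⊤ := hΩbdd.measure_lt_top.ne
  set t := decRearr Ω u0 s with ht
  set tw := decRearr Ω w s with htw
  set A := {x ∈ Ω | tw < w x} with hA
  set B := {x ∈ Ω | t < u0 x} with hB
  have hAm : MeasurableSet A := levelSet_meas hΩ hwm tw
  have hBm : MeasurableSet B := levelSet_meas hΩ hu0m t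
  have hAvol : volume A = ENNReal.ofReal s := vol_levelSet_rearr hΩ hwm hΩT hwb hwflat hs0 hsL
  have hBvol : volume B = ENNReal.ofReal s := vol_levelSet_rearr hΩ hu0m hΩT hu0b hu0flat hs0 hsL
  -- nestedness of the two level sets
  have hnest : A ⊆ B ∨ B ⊆ A := by
    by_cases hE : ∃ y, y ∈ B ∧ y ∉ A
    · left
      obtain ⟨y, hyB, hyA⟩ := hE
      intro x hxA
      refine ⟨hxA.1, ?_⟩
      by_contra hc
      push_neg at hc
      have hwxy : w x ≤ w y := hmono y hyB.1 x hxA.1 (lt_of_le_of_lt hc hyB.2)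
      have hwy : ¬ tw < w y := fun h => hyA ⟨hyB.1, h⟩
      push_neg at hwy
      have := hxA.2
      linarith
    · right
      push_neg at hE
      exact fun y hy => hE y hy
  -- the symmetric difference is null
  have hsymm : volume (symmDiff A B) = 0 := by
    have key : ∀ X Y : Set (Fin d → ℝ), X ⊆ Y → volume X = ENNReal.ofReal s →
        volume Y = ENNReal.ofReal s → MeasurableSet X → volume (symmDiff X Y) = 0 := by
      intro X Y hXY hX hY hXm
      rw [symmDiff_of_le hXY, measure_diff hXY hXm.nullMeasurableSet
        (by rw [hX]; exact ENNReal.ofReal_ne_top), hX, hY, tsub_self]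
    rcases hnest with h | h
    · exact key A B h hAvol hBvol hAm
    · rw [symmDiff_comm]; exact key B A h hBvol hAvol hBm
  refine ⟨hsymm, ?_⟩
  -- the integral identity
  have hABae : A =ᵐ[volume] B := measure_symmDiff_eq_zero_iff.1 hsymm
  have hint1 : ∫ x in A, u0 x = ∫ x in B, u0 x := setIntegral_congr_set hABae
  have hBfin : volume B ≠ ⊤ := by rw [hBvol]; exact ENNReal.ofReal_ne_top
  have hu0i : IntegrableOn u0 B := by
    refine Integrable.mono' (g := fun _ => M0) (integrableOn_const hBfin)
      hu0m.aestronglyMeasurable ?_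
    refine (ae_restrict_iff' hBm).2 (Filter.Eventually.of_forall fun x hx => ?_)
    rw [Real.norm_eq_abs]
    exact hu0b x hx.1
  have hconsti : IntegrableOn (fun _ => t) B := integrableOn_const hBfin
  have hmt : distFun Ω u0 t = s := distFun_decRearr hΩ hu0m hΩT hu0b hu0flat hs0 hsL
  set I : ENNReal := ∫⁻ r in Ioi (0:ℝ), ENNReal.ofReal (distFun Ω u0 (t + r)) with hI
  have hvolB_toReal : (volume B).toReal = s := by rw [hBvol, ENNReal.toReal_ofReal hs0.le]
  -- side 1 : the integral over B
  have hnn1 : 0 ≤ᵐ[volume.restrict B] fun x => u0 x - t :=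
    (ae_restrict_iff' hBm).2 (Filter.Eventually.of_forall fun x hx => sub_nonneg.2 hx.2.le)
  have hside1 : ∫ x in B, u0 x = I.toReal + t * s := by
    have hsub : ∫ x in B, (u0 x - t) = (∫ x in B, u0 x) - t * s := by
      rw [integral_sub hu0i hconsti, setIntegral_const, measureReal_def, hvolB_toReal, smul_eq_mul]
      ring
    have hlint : ∫ x in B, (u0 x - t) = (∫⁻ x in B, ENNReal.ofReal (u0 x - t)).toReal :=
      integral_eq_lintegral_of_nonneg_ae hnn1 (hu0m.sub measurable_const).aestronglyMeasurable
    have hlc : ∫⁻ x in B, ENNReal.ofReal (u0 x - t) = I := by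
      rw [lintegral_eq_lintegral_meas_lt _ hnn1 (hu0m.sub measurable_const).aemeasurable]
      refine setLIntegral_congr_fun measurableSet_Ioi
        (fun r hr => ?_)
      rw [Measure.restrict_apply (show MeasurableSet {a | r < u0 a - t} from measurableSet_lt measurable_const
        (hu0m.sub measurable_const))]
      have hr0 : (0:ℝ) < r := hr
      have hseteq : {a | r < u0 a - t} ∩ B = {x ∈ Ω | t + r < u0 x} := by
        ext x
        constructor
        · rintro ⟨hx1, hx2⟩
          rw [mem_setOf_eq] at hx1
          exact ⟨hx2.1, by linarith⟩
        · rintro ⟨hx1, hx2⟩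
          exact ⟨by rw [mem_setOf_eq]; linarith, hx1, by linarith⟩
      rw [hseteq]
      exact (ENNReal.ofReal_toReal (levelSet_ne_top hΩT _)).symm
    rw [hlc] at hlint
    linarith
  -- side 2 : the integral of the rearrangement
  set g : ℝ → ℝ := (Ioo (0:ℝ) s).indicator (decRearr Ω u0) with hg
  have hgm : Measurable g := by
    apply measurable_of_Ioi
    intro q
    have hpre : g ⁻¹' (Ioi q) = (Ioo 0 s ∩ Iio (distFun Ω u0 q)) ∪
        ((Ioo (0:ℝ) s)ᶜ ∩ (if q < 0 then univ else ∅)) := by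
      ext σ
      by_cases hσ : σ ∈ Ioo (0:ℝ) s
      · have hiff := rearr_gt_iff (q := q) hΩ hu0m hΩT hu0b hσ.1 (lt_trans hσ.2 hsL)
        simp only [mem_preimage, mem_Ioi, hg, indicator_of_mem hσ, mem_union, mem_inter_iff,
          mem_compl_iff, hσ, not_true, false_and, or_false, mem_Iio, true_and]
        exact hiff
      · simp only [mem_preimage, mem_Ioi, hg, indicator_of_notMem hσ, mem_union, mem_inter_iff,
          mem_compl_iff, hσ, not_false_iff, false_and, false_or, true_and]
        by_cases hq : q < 0 <;> simp [hq]
    rw [hpre]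
    refine MeasurableSet.union (measurableSet_Ioo.inter measurableSet_Iio)
      (measurableSet_Ioo.compl.inter ?_)
    split_ifs
    · exact MeasurableSet.univ
    · exact MeasurableSet.empty
  have hIoofin : volume (Ioo (0:ℝ) s) ≠ ⊤ := by simp [Real.volume_Ioo]
  have hgi : IntegrableOn g (Ioo 0 s) := by
    refine Integrable.mono' (g := fun _ => M0) (integrableOn_const hIoofin)
      hgm.aestronglyMeasurable ?_
    refine (ae_restrict_iff' measurableSet_Ioo).2 (Filter.Eventually.of_forall fun σ hσ => ?_)
    rw [Real.norm_eq_abs, hg, indicator_of_mem hσ]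
    exact abs_rearr_le hΩ hu0m hΩT hu0b hσ.1 (lt_trans hσ.2 hsL)
  have hti : IntegrableOn (fun _ => t) (Ioo (0:ℝ) s) :=
    integrableOn_const hIoofin
  have hglb : ∀ σ ∈ Ioo (0:ℝ) s, t ≤ g σ := by
    intro σ hσ
    rw [hg, indicator_of_mem hσ]
    refine le_of_forall_lt fun q hq => ?_
    refine (rearr_gt_iff hΩ hu0m hΩT hu0b hσ.1 (lt_trans hσ.2 hsL)).2 ?_
    have : distFun Ω u0 t ≤ distFun Ω u0 q := distFun_anti hΩT hq.le
    rw [hmt] at this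
    linarith [hσ.2]
  have hnn2 : 0 ≤ᵐ[volume.restrict (Ioo (0:ℝ) s)] fun σ => g σ - t :=
    (ae_restrict_iff' measurableSet_Ioo).2
      (Filter.Eventually.of_forall fun σ hσ => sub_nonneg.2 (hglb σ hσ))
  have hvolIoo : (volume (Ioo (0:ℝ) s)).toReal = s := by
    rw [Real.volume_Ioo, sub_zero, ENNReal.toReal_ofReal hs0.le]
  have hside2 : ∫ σ in (0:ℝ)..s, decRearr Ω u0 σ = I.toReal + t * s := by
    rw [intervalIntegral.integral_of_le hs0.le, integral_Ioc_eq_integral_Ioo]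
    have hcong : ∫ σ in Ioo (0:ℝ) s, decRearr Ω u0 σ = ∫ σ in Ioo (0:ℝ) s, g σ :=
      setIntegral_congr_fun measurableSet_Ioo fun σ hσ => (indicator_of_mem hσ _).symm
    rw [hcong]
    have hsub : ∫ σ in Ioo (0:ℝ) s, (g σ - t) = (∫ σ in Ioo (0:ℝ) s, g σ) - t * s := by
      rw [integral_sub hgi hti, setIntegral_const, measureReal_def, hvolIoo, smul_eq_mul]
      ring
    have hlint : ∫ σ in Ioo (0:ℝ) s, (g σ - t)
        = (∫⁻ σ in Ioo (0:ℝ) s, ENNReal.ofReal (g σ - t)).toReal :=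
      integral_eq_lintegral_of_nonneg_ae hnn2 (hgm.sub measurable_const).aestronglyMeasurable
    have hlc : ∫⁻ σ in Ioo (0:ℝ) s, ENNReal.ofReal (g σ - t) = I := by
      rw [lintegral_eq_lintegral_meas_lt _ hnn2 (hgm.sub measurable_const).aemeasurable]
      refine setLIntegral_congr_fun measurableSet_Ioi
        (fun r hr => ?_)
      rw [Measure.restrict_apply (show MeasurableSet {a | r < g a - t} from measurableSet_lt measurable_const
        (hgm.sub measurable_const))]
      have hr0 : (0:ℝ) < r := hr
      have hmtr_le : distFun Ω u0 (t + r) ≤ s := by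
        rw [← hmt]
        exact distFun_anti hΩT (le_add_of_nonneg_right hr0.le)
      have hmtr_nn : 0 ≤ distFun Ω u0 (t + r) := ENNReal.toReal_nonneg
      have hseteq : {σ | r < g σ - t} ∩ Ioo 0 s = Ioo 0 (distFun Ω u0 (t + r)) := by
        ext σ
        constructor
        · rintro ⟨h1, h2⟩
          rw [mem_setOf_eq, hg, indicator_of_mem h2] at h1
          refine ⟨h2.1, ?_⟩
          exact (rearr_gt_iff hΩ hu0m hΩT hu0b h2.1 (lt_trans h2.2 hsL)).1 (by linarith)
        · rintro ⟨h1, h2⟩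
          have hσs : σ < s := lt_of_lt_of_le h2 hmtr_le
          have hσIoo : σ ∈ Ioo (0:ℝ) s := ⟨h1, hσs⟩
          have h3 := (rearr_gt_iff hΩ hu0m hΩT hu0b h1 (lt_trans hσs hsL)).2 h2
          refine ⟨?_, hσIoo⟩
          rw [mem_setOf_eq, hg, indicator_of_mem hσIoo]
          linarith
      rw [hseteq, Real.volume_Ioo, sub_zero]
    rw [hlc] at hlint
    linarith
  rw [hint1, hside1, hside2]
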